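/- Let C be the updown category of integer compositions, with U(I) = Σ_J u(I;J)J and D the adjoint down operator, where for compositions I, J with |J| = |I| + 1, u(I;J) = d(I;J) counts the order-preserving injections f : [ℓ(I)] → [ℓ(J)] with I_a ≤ J_{f(a)} for all a. Then (DU − UD)(I) = (ℓ(I) + 2m₁(I) + 1)·I for every composition I, where ℓ(I) is the number of parts of I and m₁(I) is the number of parts equal to 1. -/

import Mathlib

/-! Statement 17: the updown category of integer compositions. A composition
is a list of positive natural numbers. -/

namespace CompositionUD

/-- The multiplicity `u(I;J) = d(I;J)`: the number of order-preserving
injections `f : [ℓ(I)] → [ℓ(J)]` with `I_a ≤ J_{f(a)}` for all `a`. -/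
noncomputable def uC (I J : List ℕ) : ℚ :=
  Nat.card {f : Fin I.length → Fin J.length //
    StrictMono f ∧ ∀ a : Fin I.length, I.get a ≤ J.get (f a)}

/-- The compositions covering `I`: those obtained by inserting a new part `1`
or incrementing a part (`u(I;J) = 0` for all other `J` with `|J|=|I|+1`). -/
def upCandidates (I : List ℕ) : Finset (List ℕ) :=
  ((Finset.range (I.length + 1)).image fun i => I.insertIdx i 1) ∪
    ((Finset.range I.length).image fun i => I.set i (I.getD i 0 + 1))

/-- The compositions covered by `I`: those obtained by deleting a part `1` or
decrementing a part `≥ 2`. -/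
def downCandidates (I : List ℕ) : Finset (List ℕ) :=
  (((Finset.range I.length).filter fun i => I.getD i 0 = 1).image
      fun i => I.eraseIdx i) ∪
    (((Finset.range I.length).filter fun i => 2 ≤ I.getD i 0).image
      fun i => I.set i (I.getD i 0 - 1))

/-- `U(I) = Σ_J u(I;J)·J` over compositions `J` covering `I`. -/
noncomputable def Uvec (I : List ℕ) : List ℕ →₀ ℚ :=
  ∑ J ∈ upCandidates I, uC I J • Finsupp.single J 1

/-- `D(I) = Σ_K d(K;I)·K` over compositions `K` covered by `I`, where
`d(K;I) = u(K;I)`. -/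
noncomputable def Dvec (I : List ℕ) : List ℕ →₀ ℚ :=
  ∑ K ∈ downCandidates I, uC K I • Finsupp.single K 1

/-- The up operator. -/
noncomputable def Uop : (List ℕ →₀ ℚ) →ₗ[ℚ] (List ℕ →₀ ℚ) :=
  Finsupp.lsum ℚ fun I => LinearMap.toSpanSingleton ℚ _ (Uvec I)

/-- The down operator. -/
noncomputable def Dop : (List ℕ →₀ ℚ) →ₗ[ℚ] (List ℕ →₀ ℚ) :=
  Finsupp.lsum ℚ fun I => LinearMap.toSpanSingleton ℚ _ (Dvec I)

lemma getD_insertIdx {I : List ℕ} {x i : ℕ} (hi : i ≤ I.length) (k : ℕ) :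
    (I.insertIdx i x).getD k 0 =
      if k < i then I.getD k 0 else if k = i then x else I.getD (k-1) 0 := by
  have hlen : (I.insertIdx i x).length = I.length + 1 := List.length_insertIdx_of_le_length hi x
  rcases lt_trichotomy k i with h | h | h
  · rw [if_pos h]
    have hk : k < I.length := lt_of_lt_of_le h hi
    rw [List.getD_eq_getElem _ _ (by omega), List.getD_eq_getElem _ _ hk,
      List.getElem_insertIdx_of_lt (l := I) (x := x) h (by rw [hlen]; omega)]
  · subst h
    rw [if_neg (lt_irrefl _), if_pos rfl, List.getD_eq_getElem _ _ (by omega),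
      List.getElem_insertIdx_self (l := I) (x := x) (i := k) (by rw [hlen]; omega)]
  · rw [if_neg (by omega), if_neg (by omega)]
    by_cases hk : k < I.length + 1
    · have hd : i + (k - i - 1) = k - 1 := by omega
      have hk' : i + (k - i - 1) < I.length := by omega
      have := List.getElem_insertIdx_of_gt (l := I) (x := x) (show i < i + (k - i - 1) + 1 by omega) (by rw [hlen]; omega)
      rw [List.getD_eq_getElem _ _ (by omega), List.getD_eq_getElem _ _ (by omega)]
      have hck : i + (k - i - 1) + 1 = k := by omega
      simp only [hd] at this
      convert this using 2 <;> omega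
    · rw [List.getD_eq_default _ _ (by omega), List.getD_eq_default _ _ (by omega)]

lemma getD_eraseIdx {I : List ℕ} {i : ℕ} (hi : i < I.length) (k : ℕ) :
    (I.eraseIdx i).getD k 0 = if k < i then I.getD k 0 else I.getD (k+1) 0 := by
  have hlen : (I.eraseIdx i).length = I.length - 1 := by
    rw [List.length_eraseIdx, if_pos hi]
  by_cases hk : k < I.length - 1
  · rw [List.getD_eq_getElem _ _ (by omega), List.getElem_eraseIdx]
    by_cases h : k < i
    · rw [dif_pos h, if_pos h, List.getD_eq_getElem _ _ (by omega)]
    · rw [dif_neg h, if_neg h, List.getD_eq_getElem _ _ (by omega)]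
  · rw [List.getD_eq_default _ _ (by omega)]
    rw [if_neg (by omega), List.getD_eq_default _ _ (by omega)]

lemma getD_set {I : List ℕ} {i x : ℕ} (k : ℕ) :
    (I.set i x).getD k 0 = if k = i ∧ k < I.length then x else I.getD k 0 := by
  by_cases hk : k < I.length
  · rw [List.getD_eq_getElem _ _ (by simpa using hk), List.getElem_set]
    split_ifs with h1 h2 h2
    · rfl
    · omega
    · omega
    · rw [List.getD_eq_getElem _ _ hk]
  · rw [List.getD_eq_default _ _ (by simpa using not_lt.mp hk),
      List.getD_eq_default _ _ (not_lt.mp hk), if_neg (by omega)]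

lemma eq_of_getD {l₁ l₂ : List ℕ} (hl : l₁.length = l₂.length)
    (h : ∀ k, k < l₁.length → l₁.getD k 0 = l₂.getD k 0) : l₁ = l₂ := by
  apply List.ext_getElem hl
  intro n h₁ h₂
  have := h n h₁
  rwa [List.getD_eq_getElem _ _ h₁, List.getD_eq_getElem _ _ h₂] at this

lemma pos_iff_getD {l : List ℕ} : (∀ a ∈ l, 0 < a) ↔ ∀ k, k < l.length → 0 < l.getD k 0 := by
  constructor
  · intro h k hk
    rw [List.getD_eq_getElem _ _ hk]
    exact h _ (List.getElem_mem hk)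
  · intro h a ha
    obtain ⟨n, hn, rfl⟩ := List.mem_iff_getElem.mp ha
    rw [← List.getD_eq_getElem _ 0 hn]
    exact h n hn

/-! ### Run lemmas -/

lemma run_of_chain_up {I : List ℕ} (hpos : ∀ k, k < I.length → 1 ≤ I.getD k 0) {p q : ℕ}
    (hq : q ≤ I.length)
    (h : ∀ a, p ≤ a → a + 1 < q → I.getD a 0 ≤ I.getD (a+1) 0)
    (hend : p < q → I.getD (q-1) 0 ≤ 1) :
    ∀ k, p ≤ k → k < q → I.getD k 0 = 1 := by
  intro k hpk hkq
  have key : ∀ d, d ≤ (q-1) - p → I.getD (q-1-d) 0 = 1 := by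
    intro d
    induction d with
    | zero =>
      intro _
      simp only [Nat.sub_zero]
      exact le_antisymm (hend (by omega)) (hpos _ (by omega))
    | succ d ih =>
      intro hd
      have h1 : I.getD (q-1-(d+1)) 0 ≤ I.getD (q-1-(d+1)+1) 0 := h _ (by omega) (by omega)
      have h2 : q-1-(d+1)+1 = q-1-d := by omega
      rw [h2] at h1
      rw [ih (by omega)] at h1
      exact le_antisymm h1 (hpos _ (by omega))
  have := key ((q-1) - k) (by omega)
  have hk : q - 1 - ((q-1) - k) = k := by omega
  rwa [hk] at this

lemma run_of_chain_down {I : List ℕ} (hpos : ∀ k, k < I.length → 1 ≤ I.getD k 0) {p q : ℕ}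
    (hq : q ≤ I.length)
    (h : ∀ a, p ≤ a → a + 1 < q → I.getD (a+1) 0 ≤ I.getD a 0)
    (hstart : p < q → I.getD p 0 ≤ 1) :
    ∀ k, p ≤ k → k < q → I.getD k 0 = 1 := by
  intro k hpk hkq
  have key : ∀ d, p + d < q → I.getD (p+d) 0 = 1 := by
    intro d
    induction d with
    | zero =>
      intro hd
      exact le_antisymm (hstart (by omega)) (hpos _ (by omega))
    | succ d ih =>
      intro hd
      have h1 : I.getD (p+d+1) 0 ≤ I.getD (p+d) 0 := h _ (by omega) (by omega)
      rw [ih (by omega)] at h1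
      have : p + (d+1) = p + d + 1 := by omega
      rw [this]
      exact le_antisymm h1 (hpos _ (by omega))
  have := key (k - p) (by omega)
  have hk : p + (k - p) = k := by omega
  rwa [hk] at this


/-! ### insertIdx/eraseIdx equality vs runs of ones -/

lemma insertIdx_eq_iff_run {I : List ℕ} (hpos : ∀ k, k < I.length → 1 ≤ I.getD k 0)
    {b i : ℕ} (hb : b ≤ i) (hi : i ≤ I.length) :
    I.insertIdx b 1 = I.insertIdx i 1 ↔ ∀ k, b ≤ k → k < i → I.getD k 0 = 1 := by
  constructor
  · intro h
    have hg : ∀ k, (I.insertIdx b 1).getD k 0 = (I.insertIdx i 1).getD k 0 := by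
      intro k; rw [h]
    apply run_of_chain_down hpos hi
    · intro a hpa ha
      have := hg (a+1)
      rw [getD_insertIdx (by omega) (a+1), getD_insertIdx hi (a+1)] at this
      rw [if_neg (by omega), if_neg (by omega), if_pos (by omega)] at this
      simp only [Nat.add_sub_cancel] at this
      omega
    · intro hlt
      have := hg b
      rw [getD_insertIdx (by omega) b, getD_insertIdx hi b] at this
      rw [if_neg (by omega), if_pos rfl, if_pos (by omega)] at this
      omega
  · intro hrun
    apply eq_of_getD
    · rw [List.length_insertIdx_of_le_length (by omega) _, List.length_insertIdx_of_le_length hi _]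
    · intro k hk
      rw [List.length_insertIdx_of_le_length (by omega) _] at hk
      rw [getD_insertIdx (by omega) k, getD_insertIdx hi k]
      rcases lt_trichotomy k b with h | h | h
      · rw [if_pos h, if_pos (by omega)]
      · subst h
        rw [if_neg (by omega), if_pos rfl]
        by_cases hki : k < i
        · rw [if_pos hki, hrun k le_rfl hki]
        · rw [if_neg hki, if_pos (by omega)]
      · rw [if_neg (by omega), if_neg (by omega)]
        by_cases hki : k < i
        · rw [if_pos hki, hrun (k-1) (by omega) (by omega), hrun k (by omega) hki]
        · rw [if_neg hki]
          by_cases hke : k = i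
          · rw [if_pos hke, hrun (k-1) (by omega) (by omega)]
          · rw [if_neg hke]

lemma eraseIdx_eq_iff_run {I : List ℕ} (hpos : ∀ k, k < I.length → 1 ≤ I.getD k 0)
    {p q : ℕ} (hpq : p ≤ q) (hq : q < I.length)
    (h1 : I.getD p 0 = 1 ∨ I.getD q 0 = 1) :
    I.eraseIdx p = I.eraseIdx q ↔ ∀ k, p ≤ k → k ≤ q → I.getD k 0 = 1 := by
  have hlen : (I.eraseIdx p).length = I.length - 1 := by
    rw [List.length_eraseIdx, if_pos (by omega)]
  have hlen' : (I.eraseIdx q).length = I.length - 1 := by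
    rw [List.length_eraseIdx, if_pos hq]
  constructor
  · intro h
    have hg : ∀ k, p ≤ k → k < q → I.getD k 0 = I.getD (k+1) 0 := by
      intro k hk hkq
      have := congrArg (fun l => List.getD l k 0) h
      rw [getD_eraseIdx (by omega) k, getD_eraseIdx hq k, if_neg (by omega),
        if_pos (by omega)] at this
      omega
    rcases h1 with h1 | h1
    · intro k hk hkq
      refine run_of_chain_down hpos (q := q+1) (by omega) ?_ (fun _ => le_of_eq h1) k hk (by omega)
      intro a ha ha'
      rw [hg a ha (by omega)]
    · intro k hk hkq
      refine run_of_chain_up hpos (q := q+1) (by omega) ?_ ?_ k hk (by omega)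
      · intro a ha ha'
        rw [hg a ha (by omega)]
      · intro _
        simpa using le_of_eq h1
  · intro hrun
    apply eq_of_getD (by rw [hlen, hlen'])
    intro k hk
    rw [hlen] at hk
    rw [getD_eraseIdx (by omega) k, getD_eraseIdx hq k]
    rcases lt_trichotomy k p with h | h | h
    · rw [if_pos h, if_pos (by omega)]
    · subst h
      rw [if_neg (by omega)]
      by_cases hkq : k < q
      · rw [if_pos hkq, hrun (k+1) (by omega) (by omega), hrun k le_rfl (by omega)]
      · rw [if_neg hkq]
    · rw [if_neg (by omega)]
      by_cases hkq : k < q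
      · rw [if_pos hkq, hrun (k+1) (by omega) (by omega), hrun k (by omega) (by omega)]
      · rw [if_neg hkq]


/-! ### Fin lemmas -/

lemma strictMono_fin_eq_id {m : ℕ} {f : Fin m → Fin m} (h : StrictMono f) : f = id := by
  have hsurj : Function.Surjective f := Finite.surjective_of_injective h.injective
  haveI : WellFoundedLT (Fin m) := inferInstance
  exact (h.range_inj (strictMono_id : StrictMono (id : Fin m → Fin m))).1
    (by rw [Set.range_id, Set.range_eq_univ]; exact hsurj)

lemma strictMono_fin_succ {m : ℕ} {f : Fin m → Fin (m+1)} (h : StrictMono f) :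
    ∃ b : Fin (m+1), f = b.succAbove := by
  classical
  obtain ⟨b, hb⟩ : ∃ b : Fin (m+1), b ∉ Set.range f := by
    by_contra hc
    push_neg at hc
    have hsurj : Function.Surjective f := fun y => hc y
    have := Fintype.card_le_of_surjective f hsurj
    simp at this
  have hsub : Finset.univ.image f ⊆ ({b}ᶜ : Finset (Fin (m+1))) := by
    intro x hx
    simp only [Finset.mem_image, Finset.mem_univ, true_and] at hx
    obtain ⟨a, rfl⟩ := hx
    simp only [Finset.mem_compl, Finset.mem_singleton]
    intro hxb
    exact hb ⟨a, hxb⟩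
  have hcard : (Finset.univ.image f).card = m := by
    rw [Finset.card_image_of_injective _ h.injective, Finset.card_univ, Fintype.card_fin]
  have hcard' : ({b}ᶜ : Finset (Fin (m+1))).card = m := by
    rw [Finset.card_compl, Finset.card_singleton, Fintype.card_fin]
    omega
  have heq : Finset.univ.image f = ({b}ᶜ : Finset (Fin (m+1))) :=
    Finset.eq_of_subset_of_card_le hsub (by omega)
  have hrange : Set.range f = Set.range b.succAbove := by
    rw [Fin.range_succAbove]
    have h1 : Set.range f = ↑(Finset.univ.image f) := by
      simp [Finset.coe_image]
    rw [h1, heq]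
    simp
  haveI : WellFoundedLT (Fin m) := inferInstance
  exact ⟨b, (h.range_inj (Fin.strictMono_succAbove b)).1 hrange⟩

lemma val_succAbove {m : ℕ} (b : Fin (m+1)) (a : Fin m) :
    (b.succAbove a).val = if a.val < b.val then a.val else a.val + 1 := by
  by_cases h : a.castSucc < b
  · rw [Fin.succAbove_of_castSucc_lt _ _ h, if_pos (by simpa [Fin.lt_def] using h)]
    rfl
  · rw [Fin.succAbove_of_le_castSucc _ _ (not_lt.mp h),
      if_neg (by simp only [Fin.lt_def] at h ⊢; simpa using h)]
    rfl

/-! ### uC evaluations -/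

lemma uC_eq_one {I J : List ℕ} (hlen : J.length = I.length)
    (hle : ∀ k, k < I.length → I.getD k 0 ≤ J.getD k 0) : uC I J = 1 := by
  have hcast : StrictMono (Fin.cast hlen.symm) := fun a b hab => hab
  have hcast' : StrictMono (Fin.cast hlen) := fun a b hab => hab
  rw [uC]
  norm_cast
  rw [Nat.card_eq_one_iff_unique]
  constructor
  · constructor
    rintro ⟨f, hf, hcf⟩ ⟨g, hg, hcg⟩
    have h1 : (fun a => Fin.cast hlen (f a)) = id := strictMono_fin_eq_id (hcast'.comp hf)
    have h2 : (fun a => Fin.cast hlen (g a)) = id := strictMono_fin_eq_id (hcast'.comp hg)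
    have hfg : f = g := by
      funext a
      apply Fin.val_injective
      have e1 := congrArg Fin.val (congrFun h1 a)
      have e2 := congrArg Fin.val (congrFun h2 a)
      simp only [id_eq, Fin.coe_cast] at e1 e2
      simp [e1, e2]
    exact Subtype.ext hfg
  · refine ⟨⟨fun a => Fin.cast hlen.symm a, hcast, ?_⟩⟩
    intro a
    have ha : a.val < I.length := a.isLt
    have := hle a.val ha
    rw [List.getD_eq_getElem _ _ ha, List.getD_eq_getElem _ _ (by omega)] at this
    simpa [List.get_eq_getElem] using this


lemma card_filter_fin (n : ℕ) (Q : ℕ → Prop) [DecidablePred Q] :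
    (Finset.filter (fun b : Fin n => Q b.val) Finset.univ).card
      = ((Finset.range n).filter Q).card := by
  apply Finset.card_bij (fun b _ => b.val)
  · intro a ha
    simp only [Finset.mem_filter, Finset.mem_univ, true_and] at ha
    simp [Finset.mem_filter, Finset.mem_range, a.isLt, ha]
  · intro a _ b _ hab
    exact Fin.val_injective hab
  · intro a ha
    simp only [Finset.mem_filter, Finset.mem_range] at ha
    exact ⟨⟨a, ha.1⟩, by simp [Finset.mem_filter, ha.2], rfl⟩

lemma uC_succ_eq_card {I J : List ℕ} (hlen : J.length = I.length + 1) :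
    uC I J = (((Finset.range (I.length+1)).filter
      (fun b => ∀ k, k < I.length →
        I.getD k 0 ≤ J.getD (if k < b then k else k+1) 0)).card : ℚ) := by
  classical
  set n := I.length with hn
  set P : ℕ → Prop := fun b => ∀ k, k < n → I.getD k 0 ≤ J.getD (if k < b then k else k+1) 0
    with hP
  have key : Nat.card {b : Fin (n+1) // P b.val}
      = Nat.card {f : Fin I.length → Fin J.length //
      StrictMono f ∧ ∀ a : Fin I.length, I.get a ≤ J.get (f a)} := by
    have hval : ∀ (b : Fin (n+1)) (a : Fin n),
        (Fin.cast hlen.symm (b.succAbove a)).val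
          = if a.val < b.val then a.val else a.val + 1 := by
      intro b a
      simp [val_succAbove]
    have hmono' : ∀ (b : Fin (n+1)),
        StrictMono (fun a : Fin I.length => Fin.cast hlen.symm (b.succAbove a)) :=
      fun b a a' haa => (Fin.strictMono_succAbove b) haa
    have hcond' : ∀ (x : {b : Fin (n+1) // P b.val}) (a : Fin I.length),
        I.get a ≤ J.get (Fin.cast hlen.symm ((x : Fin (n+1)).succAbove a)) := by
      rintro ⟨b, hb⟩ a
      have := hb a.val a.isLt
      rw [List.get_eq_getElem, List.get_eq_getElem]
      rw [← List.getD_eq_getElem I 0 a.isLt]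
      rw [← List.getD_eq_getElem J 0 (Fin.cast hlen.symm (b.succAbove a)).isLt, hval b a]
      exact this
    apply Nat.card_eq_of_bijective
      (fun x => ⟨fun a => Fin.cast hlen.symm ((x : Fin (n+1)).succAbove a),
        hmono' x, hcond' x⟩)
    constructor
    · -- injective
      rintro ⟨b, hb⟩ ⟨b', hb'⟩ hbb
      simp only [Subtype.mk.injEq] at hbb ⊢
      have : b.succAbove = b'.succAbove := by
        funext a
        have := congrFun hbb a
        apply Fin.val_injective
        simpa using congrArg Fin.val this
      exact Fin.succAbove_left_injective this
    · -- surjective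
      rintro ⟨f, hmono, hcond⟩
      have hg : StrictMono (fun a => Fin.cast hlen (f a)) := fun a b hab => hmono hab
      obtain ⟨b, hb⟩ := strictMono_fin_succ hg
      have hfa : ∀ a : Fin n, (f a).val = (b.succAbove a).val := by
        intro a
        have := congrFun hb a
        simpa using congrArg Fin.val this
      refine ⟨⟨b, ?_⟩, ?_⟩
      · intro k hk
        have := hcond ⟨k, hk⟩
        rw [List.get_eq_getElem, List.get_eq_getElem] at this
        rw [← List.getD_eq_getElem I 0 hk] at this
        rw [← List.getD_eq_getElem J 0 (f ⟨k, hk⟩).isLt] at this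
        have hv := hfa ⟨k, hk⟩
        rw [hv] at this
        rwa [val_succAbove] at this
      · apply Subtype.ext
        funext a
        apply Fin.val_injective
        simpa using (hfa a).symm
  rw [uC, ← key]
  norm_cast
  rw [Nat.card_eq_fintype_card, Fintype.card_subtype]
  exact card_filter_fin (n+1) P


/-! ### condition characterizations -/

lemma insert_cond_iff {I : List ℕ} (hpos : ∀ k, k < I.length → 1 ≤ I.getD k 0) {i b : ℕ}
    (hi : i ≤ I.length) (hb : b ≤ I.length) :
    (∀ k, k < I.length → I.getD k 0 ≤ (I.insertIdx i 1).getD (if k < b then k else k+1) 0)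
      ↔ I.insertIdx b 1 = I.insertIdx i 1 := by
  rcases le_or_gt b i with hbi | hbi
  · constructor
    · intro hcond
      rw [insertIdx_eq_iff_run hpos hbi hi]
      apply run_of_chain_up hpos hi
      · intro a ha ha'
        have := hcond a (by omega)
        rw [if_neg (by omega), getD_insertIdx hi, if_pos (by omega)] at this
        exact this
      · intro hlt
        have := hcond (i-1) (by omega)
        rw [if_neg (by omega), getD_insertIdx hi] at this
        rw [if_neg (by omega), if_pos (by omega)] at this
        exact this
    · intro heq k hk
      have hrun := (insertIdx_eq_iff_run hpos hbi hi).mp heq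
      rw [getD_insertIdx hi]
      by_cases hkb : k < b
      · rw [if_pos hkb, if_pos (by omega)]
      · rw [if_neg hkb]
        by_cases hki : k + 1 < i
        · rw [if_pos hki, hrun k (by omega) (by omega)]
          exact hpos (k+1) (by omega)
        · by_cases hke : k + 1 = i
          · rw [if_neg hki, if_pos hke, hrun k (by omega) (by omega)]
          · rw [if_neg hki, if_neg hke]
            simp only [Nat.add_sub_cancel]
            exact le_rfl
  · constructor
    · intro hcond
      rw [eq_comm, insertIdx_eq_iff_run hpos (le_of_lt hbi) hb]
      apply run_of_chain_down hpos hb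
      · intro a ha ha'
        have := hcond (a+1) (by omega)
        rw [if_pos (by omega), getD_insertIdx hi] at this
        rw [if_neg (by omega), if_neg (by omega)] at this
        simpa using this
      · intro hlt
        have := hcond i (by omega)
        rw [if_pos (by omega), getD_insertIdx hi, if_neg (by omega), if_pos rfl] at this
        exact this
    · intro heq k hk
      have hrun := (insertIdx_eq_iff_run hpos (le_of_lt hbi) hb).mp heq.symm
      rw [getD_insertIdx hi]
      by_cases hkb : k < b
      · rw [if_pos hkb]
        by_cases hki : k < i
        · rw [if_pos hki]
        · by_cases hke : k = i
          · rw [if_neg hki, if_pos hke, hrun k (by omega) (by omega)]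
          · rw [if_neg hki, if_neg hke, hrun k (by omega) (by omega),
              hrun (k-1) (by omega) (by omega)]
      · rw [if_neg hkb, if_neg (by omega), if_neg (by omega)]
        simp only [Nat.add_sub_cancel]
        exact le_rfl

lemma erase_cond_iff {I : List ℕ} (hpos : ∀ k, k < I.length → 1 ≤ I.getD k 0) {i b : ℕ}
    (hi : i < I.length) (hb : b < I.length) (h1 : I.getD i 0 = 1) :
    (∀ k, k < (I.eraseIdx i).length →
        (I.eraseIdx i).getD k 0 ≤ I.getD (if k < b then k else k+1) 0)
      ↔ (I.getD b 0 = 1 ∧ I.eraseIdx b = I.eraseIdx i) := by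
  have hlen : (I.eraseIdx i).length = I.length - 1 := by
    rw [List.length_eraseIdx, if_pos hi]
  rcases le_or_gt b i with hbi | hbi
  · constructor
    · intro hcond
      have hrun : ∀ k, b ≤ k → k < i + 1 → I.getD k 0 = 1 := by
        apply run_of_chain_up hpos (by omega)
        · intro a ha ha'
          have := hcond a (by omega)
          rw [if_neg (by omega), getD_eraseIdx hi, if_pos (by omega)] at this
          exact this
        · intro _
          simpa using le_of_eq h1
      refine ⟨hrun b le_rfl (by omega), ?_⟩
      rw [eraseIdx_eq_iff_run hpos hbi hi (Or.inr h1)]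
      intro k hk hk'
      exact hrun k hk (by omega)
    · rintro ⟨hb1, heq⟩ k hk
      have hrun := (eraseIdx_eq_iff_run hpos hbi hi (Or.inr h1)).mp heq
      rw [hlen] at hk
      rw [getD_eraseIdx hi]
      by_cases hkb : k < b
      · rw [if_pos hkb, if_pos (by omega)]
      · rw [if_neg hkb]
        by_cases hki : k < i
        · rw [if_pos hki, hrun k (by omega) (by omega)]
          exact hpos (k+1) (by omega)
        · rw [if_neg hki]
  · constructor
    · intro hcond
      have hrun : ∀ k, i ≤ k → k < b + 1 → I.getD k 0 = 1 := by
        apply run_of_chain_down hpos (by omega)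
        · intro a ha ha'
          have := hcond a (by omega)
          rw [if_pos (by omega), getD_eraseIdx hi, if_neg (by omega)] at this
          exact this
        · intro _
          exact le_of_eq h1
      refine ⟨hrun b (by omega) (by omega), ?_⟩
      symm
      rw [eraseIdx_eq_iff_run hpos (le_of_lt hbi) hb (Or.inl h1)]
      intro k hk hk'
      exact hrun k hk (by omega)
    · rintro ⟨hb1, heq⟩ k hk
      have hrun := (eraseIdx_eq_iff_run hpos (le_of_lt hbi) hb (Or.inl h1)).mp heq.symm
      rw [hlen] at hk
      rw [getD_eraseIdx hi]
      by_cases hki : k < i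
      · rw [if_pos hki, if_pos (by omega)]
      · rw [if_neg hki]
        by_cases hkb : k < b
        · rw [if_pos hkb, hrun (k+1) (by omega) (by omega), hrun k (by omega) (by omega)]
        · rw [if_neg hkb]


/-! ### closed forms -/

lemma Uvec_eq (I : List ℕ) (hpos : ∀ a ∈ I, 0 < a) :
    Uvec I = (∑ i ∈ Finset.range (I.length+1), Finsupp.single (I.insertIdx i 1) (1:ℚ))
      + ∑ i ∈ Finset.range I.length, Finsupp.single (I.set i (I.getD i 0 + 1)) (1:ℚ) := by
  classical
  have hpos' : ∀ k, k < I.length → 1 ≤ I.getD k 0 := fun k hk => pos_iff_getD.mp hpos k hk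
  have hdisj : Disjoint ((Finset.range (I.length + 1)).image fun i => I.insertIdx i 1)
      ((Finset.range I.length).image fun i => I.set i (I.getD i 0 + 1)) := by
    rw [Finset.disjoint_left]
    intro J hJ hJ'
    simp only [Finset.mem_image, Finset.mem_range] at hJ hJ'
    obtain ⟨i, hi, rfl⟩ := hJ
    obtain ⟨j, hj, hJ'⟩ := hJ'
    have h1 : (I.insertIdx i 1).length = I.length + 1 := List.length_insertIdx_of_le_length (by omega) _
    have h2 : (I.set j (I.getD j 0 + 1)).length = I.length := by simp
    rw [hJ'] at h2
    omega
  rw [Uvec, upCandidates, Finset.sum_union hdisj]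
  congr 1
  · apply Finset.sum_image'
    intro c hc
    rw [Finset.mem_range] at hc
    have hc' : c ≤ I.length := by omega
    have hlen : (I.insertIdx c 1).length = I.length + 1 := List.length_insertIdx_of_le_length hc' _
    have hfib : (Finset.range (I.length+1)).filter
        (fun b => ∀ k, k < I.length →
          I.getD k 0 ≤ (I.insertIdx c 1).getD (if k < b then k else k+1) 0)
        = (Finset.range (I.length+1)).filter
            (fun j => I.insertIdx j 1 = I.insertIdx c 1) := by
      apply Finset.filter_congr
      intro b hb
      rw [Finset.mem_range] at hb
      first
      | exact insert_cond_iff hpos' hc' (by omega)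
      | exact eq_iff_iff.mpr (insert_cond_iff hpos' hc' (by omega))
    rw [uC_succ_eq_card hlen, hfib, Nat.cast_smul_eq_nsmul, ← Finset.sum_const]
    apply Finset.sum_congr rfl
    intro j hj
    rw [Finset.mem_filter] at hj
    rw [hj.2]
  · rw [Finset.sum_image (fun i hi j hj hij => by
      rw [Finset.mem_coe, Finset.mem_range] at hi hj
      by_contra hne
      have h1 : (I.set i (I.getD i 0 + 1)).getD i 0
          = (I.set j (I.getD j 0 + 1)).getD i 0 := by rw [hij]
      rw [getD_set, getD_set, if_pos (⟨rfl, hi⟩ : i = i ∧ i < I.length),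
        if_neg (fun hc : i = j ∧ i < I.length => hne hc.1)] at h1
      omega)]
    apply Finset.sum_congr rfl
    intro i hi
    rw [Finset.mem_range] at hi
    rw [uC_eq_one (by simp) (fun k hk => by
      rw [getD_set]
      split_ifs with h
      · obtain ⟨rfl, _⟩ := h; omega
      · exact le_rfl), one_smul]

lemma Dvec_eq (I : List ℕ) (hpos : ∀ a ∈ I, 0 < a) :
    Dvec I = (∑ i ∈ (Finset.range I.length).filter (fun i => I.getD i 0 = 1),
        Finsupp.single (I.eraseIdx i) (1:ℚ))
      + ∑ i ∈ (Finset.range I.length).filter (fun i => 2 ≤ I.getD i 0),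
          Finsupp.single (I.set i (I.getD i 0 - 1)) (1:ℚ) := by
  classical
  have hpos' : ∀ k, k < I.length → 1 ≤ I.getD k 0 := fun k hk => pos_iff_getD.mp hpos k hk
  have hdisj : Disjoint
      ((((Finset.range I.length).filter fun i => I.getD i 0 = 1)).image fun i => I.eraseIdx i)
      ((((Finset.range I.length).filter fun i => 2 ≤ I.getD i 0)).image
        fun i => I.set i (I.getD i 0 - 1)) := by
    rw [Finset.disjoint_left]
    intro K hK hK'
    simp only [Finset.mem_image, Finset.mem_filter, Finset.mem_range] at hK hK'
    obtain ⟨i, ⟨hi, _⟩, rfl⟩ := hK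
    obtain ⟨j, ⟨hj, _⟩, hK'⟩ := hK'
    have h1 : (I.eraseIdx i).length = I.length - 1 := by
      rw [List.length_eraseIdx, if_pos hi]
    have h2 : (I.set j (I.getD j 0 - 1)).length = I.length := by simp
    rw [hK'] at h2
    omega
  rw [Dvec, downCandidates, Finset.sum_union hdisj]
  congr 1
  · apply Finset.sum_image'
    intro c hc
    rw [Finset.mem_filter, Finset.mem_range] at hc
    obtain ⟨hc, hc1⟩ := hc
    have hlen : I.length = (I.eraseIdx c).length + 1 := by
      rw [List.length_eraseIdx, if_pos hc]; omega
    have hfib : (Finset.range ((I.eraseIdx c).length+1)).filter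
        (fun b => ∀ k, k < (I.eraseIdx c).length →
          (I.eraseIdx c).getD k 0 ≤ I.getD (if k < b then k else k+1) 0)
        = ((Finset.range I.length).filter fun i => I.getD i 0 = 1).filter
            (fun j => I.eraseIdx j = I.eraseIdx c) := by
      rw [Finset.filter_filter, ← hlen]
      apply Finset.filter_congr
      intro b hb
      rw [Finset.mem_range] at hb
      first
      | exact erase_cond_iff hpos' hc hb hc1
      | exact eq_iff_iff.mpr (erase_cond_iff hpos' hc hb hc1)
    rw [uC_succ_eq_card (I := I.eraseIdx c) (J := I) hlen, hfib, Nat.cast_smul_eq_nsmul, ← Finset.sum_const]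
    apply Finset.sum_congr rfl
    intro j hj
    rw [Finset.mem_filter] at hj
    rw [hj.2]
  · rw [Finset.sum_image (fun i hi j hj hij => by
      rw [Finset.mem_coe, Finset.mem_filter, Finset.mem_range] at hi hj
      by_contra hne
      have h1 : (I.set i (I.getD i 0 - 1)).getD i 0
          = (I.set j (I.getD j 0 - 1)).getD i 0 := by rw [hij]
      rw [getD_set, getD_set, if_pos (⟨rfl, hi.1⟩ : i = i ∧ i < I.length),
        if_neg (fun hc : i = j ∧ i < I.length => hne hc.1)] at h1
      omega)]
    apply Finset.sum_congr rfl
    intro i hi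
    rw [Finset.mem_filter, Finset.mem_range] at hi
    rw [uC_eq_one (by simp) (fun k hk => by
      rw [getD_set]
      split_ifs with h
      · obtain ⟨rfl, _⟩ := h; omega
      · exact le_rfl), one_smul]


/-! ### positivity preservation and supports -/

lemma pos_insertIdx {I : List ℕ} (h : ∀ a ∈ I, 0 < a) {i : ℕ} (hi : i ≤ I.length) :
    ∀ a ∈ I.insertIdx i 1, 0 < a := by
  rw [pos_iff_getD] at h ⊢
  intro k hk
  rw [List.length_insertIdx_of_le_length hi _] at hk
  rw [getD_insertIdx hi]
  split_ifs with h1 h2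
  · exact h k (by omega)
  · omega
  · exact h (k-1) (by omega)

lemma pos_set {I : List ℕ} (h : ∀ a ∈ I, 0 < a) {i v : ℕ} (hv : 0 < v) :
    ∀ a ∈ I.set i v, 0 < a := by
  rw [pos_iff_getD] at h ⊢
  intro k hk
  rw [List.length_set] at hk
  rw [getD_set]
  split_ifs with h1
  · exact hv
  · exact h k hk

lemma pos_eraseIdx {I : List ℕ} (h : ∀ a ∈ I, 0 < a) {i : ℕ} :
    ∀ a ∈ I.eraseIdx i, 0 < a := by
  intro a ha
  exact h a (List.mem_of_mem_eraseIdx ha)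

lemma Uvec_support_pos {I : List ℕ} (hpos : ∀ a ∈ I, 0 < a) :
    ∀ K ∈ (Uvec I).support, ∀ a ∈ K, 0 < a := by
  intro K hK
  rw [Uvec_eq _ hpos] at hK
  have h1 := Finsupp.support_add hK
  rw [Finset.mem_union] at h1
  rcases h1 with h1 | h1
  · have h2 := Finsupp.support_finset_sum h1
    rw [Finset.mem_biUnion] at h2
    obtain ⟨i, hi, hK2⟩ := h2
    rw [Finset.mem_range] at hi
    have := Finsupp.support_single_subset hK2
    rw [Finset.mem_singleton] at this
    subst this
    exact pos_insertIdx hpos (by omega)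
  · have h2 := Finsupp.support_finset_sum h1
    rw [Finset.mem_biUnion] at h2
    obtain ⟨i, hi, hK2⟩ := h2
    rw [Finset.mem_range] at hi
    have := Finsupp.support_single_subset hK2
    rw [Finset.mem_singleton] at this
    subst this
    exact pos_set hpos (by omega)

lemma Dvec_support_pos {I : List ℕ} (hpos : ∀ a ∈ I, 0 < a) :
    ∀ K ∈ (Dvec I).support, ∀ a ∈ K, 0 < a := by
  intro K hK
  rw [Dvec_eq _ hpos] at hK
  have h1 := Finsupp.support_add hK
  rw [Finset.mem_union] at h1
  have hpos' : ∀ k, k < I.length → 1 ≤ I.getD k 0 := fun k hk => pos_iff_getD.mp hpos k hk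
  rcases h1 with h1 | h1
  · have h2 := Finsupp.support_finset_sum h1
    rw [Finset.mem_biUnion] at h2
    obtain ⟨i, hi, hK2⟩ := h2
    rw [Finset.mem_filter, Finset.mem_range] at hi
    have := Finsupp.support_single_subset hK2
    rw [Finset.mem_singleton] at this
    subst this
    exact pos_eraseIdx hpos
  · have h2 := Finsupp.support_finset_sum h1
    rw [Finset.mem_biUnion] at h2
    obtain ⟨i, hi, hK2⟩ := h2
    rw [Finset.mem_filter, Finset.mem_range] at hi
    have := Finsupp.support_single_subset hK2
    rw [Finset.mem_singleton] at this
    subst this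
    exact pos_set hpos (by omega)

/-! ### the cons operator -/

noncomputable def Cn (n : ℕ) : (List ℕ →₀ ℚ) →ₗ[ℚ] (List ℕ →₀ ℚ) :=
  Finsupp.lmapDomain ℚ ℚ (List.cons n)

lemma Cn_single (n : ℕ) (K : List ℕ) (c : ℚ) :
    Cn n (Finsupp.single K c) = Finsupp.single (n::K) c := by
  rw [Cn, Finsupp.lmapDomain_apply, Finsupp.mapDomain_single]

lemma Uop_single (K : List ℕ) (c : ℚ) : Uop (Finsupp.single K c) = c • Uvec K := by
  rw [Uop, Finsupp.lsum_single, LinearMap.toSpanSingleton_apply]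

lemma Dop_single (K : List ℕ) (c : ℚ) : Dop (Finsupp.single K c) = c • Dvec K := by
  rw [Dop, Finsupp.lsum_single, LinearMap.toSpanSingleton_apply]


/-! ### cons recursions -/

lemma Uvec_cons (n : ℕ) (I : List ℕ) (hpos : ∀ a ∈ n::I, 0 < a) :
    Uvec (n :: I) = Finsupp.single (1::n::I) 1 + Finsupp.single ((n+1)::I) 1
      + Cn n (Uvec I) := by
  have hposI : ∀ a ∈ I, 0 < a := fun a ha => hpos a (List.mem_cons_of_mem _ ha)
  rw [Uvec_eq _ hpos, Uvec_eq _ hposI, map_add, map_sum, map_sum]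
  simp only [Cn_single, List.length_cons]
  rw [Finset.sum_range_succ' (fun i => Finsupp.single ((n::I).insertIdx i 1) (1:ℚ)) (I.length+1)]
  rw [Finset.sum_range_succ' (fun i => Finsupp.single ((n::I).set i ((n::I).getD i 0 + 1)) (1:ℚ)) I.length]
  simp only [List.insertIdx_succ_cons, List.set_cons_succ, List.getD_cons_succ,
    List.getD_cons_zero, List.insertIdx_zero, List.set_cons_zero]
  abel

lemma Dvec_cons (n : ℕ) (I : List ℕ) (hpos : ∀ a ∈ n::I, 0 < a) :
    Dvec (n :: I) = (if n = 1 then Finsupp.single I (1:ℚ)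
        else Finsupp.single ((n-1)::I) 1) + Cn n (Dvec I) := by
  have hposI : ∀ a ∈ I, 0 < a := fun a ha => hpos a (List.mem_cons_of_mem _ ha)
  have hn : 0 < n := hpos n (List.mem_cons_self)
  rw [Dvec_eq _ hpos, Dvec_eq _ hposI, map_add, map_sum, map_sum]
  simp only [Cn_single, List.length_cons, Finset.sum_filter]
  rw [Finset.sum_range_succ' (fun i => if (n::I).getD i 0 = 1
    then Finsupp.single ((n::I).eraseIdx i) (1:ℚ) else 0) I.length]
  rw [Finset.sum_range_succ' (fun i => if 2 ≤ (n::I).getD i 0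
    then Finsupp.single ((n::I).set i ((n::I).getD i 0 - 1)) (1:ℚ) else 0) I.length]
  simp only [List.getD_cons_succ, List.getD_cons_zero, List.eraseIdx_cons_succ,
    List.set_cons_succ, List.set_cons_zero, List.eraseIdx_cons_zero,
    apply_ite (Cn n), Cn_single, map_zero]
  by_cases hn1 : n = 1
  · subst hn1
    norm_num
    abel
  · rw [if_neg hn1, if_neg hn1, if_pos (by omega : 2 ≤ n)]
    abel


/-! ### operator-level cons lemmas -/

lemma Dop_Cn (n : ℕ) (hn : 0 < n) (f : List ℕ →₀ ℚ)
    (hf : ∀ K ∈ f.support, ∀ a ∈ K, 0 < a) :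
    Dop (Cn n f) = (if n = 1 then f else Cn (n-1) f) + Cn n (Dop f) := by
  have hposK : ∀ K ∈ f.support, ∀ a ∈ n::K, 0 < a := by
    intro K hK a ha
    rcases List.mem_cons.mp ha with rfl | ha
    · exact hn
    · exact hf K hK a ha
  have h1 : Dop (Cn n f) = ∑ K ∈ f.support, Dop (Cn n (Finsupp.single K (f K))) := by
    conv_lhs => rw [← Finsupp.sum_single f, Finsupp.sum, map_sum, map_sum]
  have h2 : (if n = 1 then f else Cn (n-1) f) + Cn n (Dop f)
      = ∑ K ∈ f.support, ((if n = 1 then Finsupp.single K (f K)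
          else Finsupp.single ((n-1)::K) (f K))
        + Cn n (Dop (Finsupp.single K (f K)))) := by
    rw [Finset.sum_add_distrib]
    congr 1
    · split_ifs
      · conv_lhs => rw [← Finsupp.sum_single f, Finsupp.sum]
      · conv_lhs => rw [← Finsupp.sum_single f, Finsupp.sum, map_sum]
        exact Finset.sum_congr rfl fun K _ => Cn_single _ _ _
    · conv_lhs => rw [← Finsupp.sum_single f, Finsupp.sum, map_sum, map_sum]
  rw [h1, h2]
  apply Finset.sum_congr rfl
  intro K hK
  rw [Cn_single, Dop_single, Dvec_cons n K (hposK K hK), smul_add, Dop_single, map_smul]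
  congr 1
  split_ifs
  · rw [Finsupp.smul_single, smul_eq_mul, mul_one]
  · rw [Finsupp.smul_single, smul_eq_mul, mul_one]

lemma Uop_Cn (n : ℕ) (hn : 0 < n) (f : List ℕ →₀ ℚ)
    (hf : ∀ K ∈ f.support, ∀ a ∈ K, 0 < a) :
    Uop (Cn n f) = Cn 1 (Cn n f) + Cn (n+1) f + Cn n (Uop f) := by
  have hposK : ∀ K ∈ f.support, ∀ a ∈ n::K, 0 < a := by
    intro K hK a ha
    rcases List.mem_cons.mp ha with rfl | ha
    · exact hn
    · exact hf K hK a ha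
  have h1 : Uop (Cn n f) = ∑ K ∈ f.support, Uop (Cn n (Finsupp.single K (f K))) := by
    conv_lhs => rw [← Finsupp.sum_single f, Finsupp.sum, map_sum, map_sum]
  have h2 : Cn 1 (Cn n f) + Cn (n+1) f + Cn n (Uop f)
      = ∑ K ∈ f.support, (Finsupp.single (1::n::K) (f K) + Finsupp.single ((n+1)::K) (f K)
        + Cn n (Uop (Finsupp.single K (f K)))) := by
    have e1 : Cn 1 (Cn n f) = ∑ K ∈ f.support, Finsupp.single (1::n::K) (f K) := by
      conv_lhs => rw [← Finsupp.sum_single f, Finsupp.sum, map_sum, map_sum]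
      exact Finset.sum_congr rfl fun K _ => by rw [Cn_single, Cn_single]
    have e2 : Cn (n+1) f = ∑ K ∈ f.support, Finsupp.single ((n+1)::K) (f K) := by
      conv_lhs => rw [← Finsupp.sum_single f, Finsupp.sum, map_sum]
      exact Finset.sum_congr rfl fun K _ => Cn_single _ _ _
    have e3 : Cn n (Uop f) = ∑ K ∈ f.support, Cn n (Uop (Finsupp.single K (f K))) := by
      conv_lhs => rw [← Finsupp.sum_single f, Finsupp.sum, map_sum, map_sum]
    rw [e1, e2, e3, ← Finset.sum_add_distrib, ← Finset.sum_add_distrib]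
  rw [h1, h2]
  apply Finset.sum_congr rfl
  intro K hK
  rw [Cn_single, Uop_single, Uvec_cons n K (hposK K hK), Uop_single]
  simp [smul_add, Finsupp.smul_single, map_smul]


/-! ### main commutator identity -/

lemma comm_vec : ∀ (I : List ℕ), (∀ a ∈ I, 0 < a) →
    Dop (Uvec I) - Uop (Dvec I)
      = ((I.length : ℚ) + 2 * I.count 1 + 1) • Finsupp.single I 1 := by
  intro I
  induction I with
  | nil =>
    intro _
    have h1 : Uvec [] = Finsupp.single [1] (1:ℚ) := by
      rw [Uvec_eq _ (by simp)]; simp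
    have h2 : Dvec ([] : List ℕ) = 0 := by
      rw [Dvec_eq _ (by simp)]; simp
    have h3 : Dvec [1] = Finsupp.single [] (1:ℚ) := by
      rw [Dvec_eq _ (by simp)]
      simp [Finset.range_one, Finset.filter_singleton, List.getD]
    rw [h1, h2, map_zero, Dop_single, one_smul, h3]
    simp
  | cons n I ih =>
    intro hpos
    have hn : 0 < n := hpos n (List.mem_cons_self)
    have hposI : ∀ a ∈ I, 0 < a := fun a ha => hpos a (List.mem_cons_of_mem _ ha)
    have ih' := ih hposI
    have hU := Uvec_support_pos hposI
    have hD := Dvec_support_pos hposI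
    have pos1 : ∀ a ∈ 1::n::I, 0 < a := by
      intro a ha
      rcases List.mem_cons.mp ha with rfl | ha
      · exact one_pos
      · exact hpos a ha
    have pos2 : ∀ a ∈ (n+1)::I, 0 < a := by
      intro a ha
      rcases List.mem_cons.mp ha with rfl | ha
      · omega
      · exact hposI a ha
    have hDU : Dop (Uvec (n::I)) = Dvec (1::n::I) + Dvec ((n+1)::I)
        + ((if n = 1 then Uvec I else Cn (n-1) (Uvec I)) + Cn n (Dop (Uvec I))) := by
      rw [Uvec_cons n I hpos, map_add, map_add, Dop_single, Dop_single, one_smul, one_smul,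
        Dop_Cn n hn _ hU]
    have hUD : Uop (Dvec (n::I)) = (if n = 1 then Uvec I else Uvec ((n-1)::I))
        + (Cn 1 (Cn n (Dvec I)) + Cn (n+1) (Dvec I) + Cn n (Uop (Dvec I))) := by
      rw [Dvec_cons n I hpos, map_add, Uop_Cn n hn _ hD]
      congr 1
      split_ifs
      · rw [Uop_single, one_smul]
      · rw [Uop_single, one_smul]
    have e1 : Dvec (1::n::I) = Finsupp.single (n::I) 1
        + ((if n = 1 then Cn 1 (Finsupp.single I (1:ℚ))
            else Cn 1 (Finsupp.single ((n-1)::I) (1:ℚ)))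
          + Cn 1 (Cn n (Dvec I))) := by
      rw [Dvec_cons 1 (n::I) pos1, if_pos rfl, Dvec_cons n I hpos, map_add, apply_ite (Cn 1)]
    have e2 : Dvec ((n+1)::I) = Finsupp.single (n::I) 1 + Cn (n+1) (Dvec I) := by
      rw [Dvec_cons (n+1) I pos2, if_neg (by omega), Nat.add_sub_cancel]
    have ih2 : Cn n (Dop (Uvec I)) = Cn n (Uop (Dvec I))
        + ((I.length : ℚ) + 2 * I.count 1 + 1) • Finsupp.single (n::I) 1 := by
      rw [eq_add_of_sub_eq ih', map_add, map_smul, Cn_single]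
      abel
    by_cases hn1 : n = 1
    · subst hn1
      rw [hDU, hUD, e1, e2, ih2, if_pos rfl, if_pos rfl, if_pos rfl]
      have hc : ((↑((1::I).length) : ℚ) + 2 * (1::I).count 1 + 1)
          = (((I.length : ℚ) + 2 * I.count 1 + 1) + 3) := by
        simp [List.count_cons]
        push_cast
        ring
      have h4 : (((I.length : ℚ) + 2 * I.count 1 + 1) + 3) • Finsupp.single (1::I) (1:ℚ)
          = ((I.length : ℚ) + 2 * I.count 1 + 1) • Finsupp.single (1::I) 1
            + (Finsupp.single (1::I) 1 + Finsupp.single (1::I) 1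
              + Finsupp.single (1::I) 1) := by
        have h5 : ((3:ℚ)) • Finsupp.single (1::I) (1:ℚ)
            = Finsupp.single (1::I) 1 + Finsupp.single (1::I) 1 + Finsupp.single (1::I) 1 := by
          rw [show (3:ℚ) = 1+1+1 by norm_num, add_smul, add_smul, one_smul]
        rw [add_smul, h5]
      rw [hc, h4, Cn_single]
      abel
    · have hn2 : 2 ≤ n := by omega
      have pos3 : ∀ a ∈ (n-1)::I, 0 < a := by
        intro a ha
        rcases List.mem_cons.mp ha with rfl | ha
        · omega
        · exact hposI a ha
      have e4 : Uvec ((n-1)::I) = Finsupp.single (1::(n-1)::I) 1 + Finsupp.single (n::I) 1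
          + Cn (n-1) (Uvec I) := by
        rw [Uvec_cons (n-1) I pos3]
        have : n - 1 + 1 = n := by omega
        rw [this]
      rw [hDU, hUD, e1, e2, ih2, if_neg hn1, if_neg hn1, if_neg hn1]
      rw [e4, Cn_single]
      have hc : ((↑((n::I).length) : ℚ) + 2 * (n::I).count 1 + 1)
          = (((I.length : ℚ) + 2 * I.count 1 + 1) + 1) := by
        simp [List.count_cons, hn1]
        push_cast
        ring
      have h4 : (((I.length : ℚ) + 2 * I.count 1 + 1) + 1) • Finsupp.single (n::I) (1:ℚ)
          = ((I.length : ℚ) + 2 * I.count 1 + 1) • Finsupp.single (n::I) 1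
            + Finsupp.single (n::I) 1 := by
        rw [add_smul, one_smul]
      rw [hc, h4]
      abel

/-- `(DU − UD)(I) = (ℓ(I) + 2m₁(I) + 1)·I` for every integer composition
`I`. -/
theorem commutator_eq (I : List ℕ) (hpos : ∀ a ∈ I, 0 < a) :
    Dop (Uop (Finsupp.single I 1)) - Uop (Dop (Finsupp.single I 1)) =
      ((I.length : ℚ) + 2 * I.count 1 + 1) • Finsupp.single I 1 := by
  rw [Uop_single, Dop_single, one_smul, one_smul]
  exact comm_vec I hpos

end CompositionUD
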